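/- Let F be an upwards-closed family over a finite set V with blocker B(F) (the minimal sets intersecting every member of F), and suppose every B ∈ B(F) has |B| ≤ β. Let f be a nonnegative, normalized, monotone submodular function. If x ≥ 0 satisfies Σ_{v∈B} Σ_{S∋v} x(S) ≥ 1 for all B ∈ B(F) (i.e., x is feasible for the natural LP), then the set Q = {v ∈ V : Σ_{S∋v} x(S) ≥ 1/β} belongs to F and f(Q) ≤ β · Σ_S x(S) f(S). Consequently, the natural LP relaxation has integrality gap at most β. -/

import Mathlib

open Finset

/-- B is a minimal set intersecting every member of F, i.e. B ∈ B(F). -/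
def IsBlockerElem {α : Type*} [DecidableEq α] (F : Finset α → Prop) (B : Finset α) : Prop :=
  (∀ A, F A → (B ∩ A).Nonempty) ∧
    ∀ B' ⊆ B, (∀ A, F A → (B' ∩ A).Nonempty) → B' = B

lemma cover_bound {V : Type*} [Fintype V] [DecidableEq V] (Q : Finset V) :
    ∀ (f : Finset V → ℝ), (∀ S, 0 ≤ f S) → f ∅ = 0 →
    (∀ A B : Finset V, A ⊆ B → f A ≤ f B) →
    (∀ A B : Finset V, f (A ∪ B) + f (A ∩ B) ≤ f A + f B) →
    ∀ (y : Finset V → ℝ), (∀ S, 0 ≤ y S) →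
    (∀ v ∈ Q, 1 ≤ ∑ S ∈ univ.filter (fun S : Finset V => v ∈ S), y S) →
    f Q ≤ ∑ S : Finset V, y S * f S := by
  induction Q using Finset.induction_on with
  | empty =>
      intro f hnn hnorm hmono hsub y hy hcov
      rw [hnorm]
      exact Finset.sum_nonneg fun S _ => mul_nonneg (hy S) (hnn S)
  | @insert v Q' hvQ ih =>
      intro f hnn hnorm hmono hsub y hy hcov
      set g : Finset V → ℝ := fun S => f (insert v S) - f {v} with hg
      have gnn : ∀ S, 0 ≤ g S := by
        intro S
        have : f {v} ≤ f (insert v S) := hmono _ _ (by simp)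
        simp only [hg]; linarith
      have gnorm : g ∅ = 0 := by simp [hg]
      have gmono : ∀ A B : Finset V, A ⊆ B → g A ≤ g B := by
        intro A B h
        have := hmono _ _ (Finset.insert_subset_insert v h)
        simp only [hg]; linarith
      have gsub : ∀ A B : Finset V, g (A ∪ B) + g (A ∩ B) ≤ g A + g B := by
        intro A B
        have h1 : insert v A ∪ insert v B = insert v (A ∪ B) := by
          ext a; simp; try tauto
        have h2 : insert v A ∩ insert v B = insert v (A ∩ B) := by
          ext a; simp; try tauto
        have := hsub (insert v A) (insert v B)
        rw [h1, h2] at this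
        simp only [hg]; linarith
      have hcov' : ∀ v' ∈ Q', 1 ≤ ∑ S ∈ univ.filter (fun S : Finset V => v' ∈ S), y S :=
        fun v' hv' => hcov v' (mem_insert_of_mem hv')
      have hIH : g Q' ≤ ∑ S : Finset V, y S * g S :=
        ih g gnn gnorm gmono gsub y hy hcov'
      -- pointwise bound
      have hpt : ∀ S : Finset V,
          y S * g S ≤ y S * f S - (if v ∈ S then y S * f {v} else 0) := by
        intro S
        by_cases hvS : v ∈ S
        · have hins : insert v S = S := Finset.insert_eq_self.mpr hvS
          simp only [hg, hins, if_pos hvS]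
          ring_nf
          exact le_refl _
        · have hcap : S ∩ {v} = ∅ := by
            ext a; simp; rintro haS rfl; exact hvS haS
          have hcup : S ∪ {v} = insert v S := by
            ext a; simp; try tauto
          have := hsub S {v}
          rw [hcap, hcup, hnorm] at this
          have hgle : g S ≤ f S := by simp only [hg]; linarith
          simp only [if_neg hvS, sub_zero]
          exact mul_le_mul_of_nonneg_left hgle (hy S)
      have hsum : ∑ S : Finset V, y S * g S ≤
          ∑ S : Finset V, y S * f S
            - (∑ S ∈ univ.filter (fun S : Finset V => v ∈ S), y S) * f {v} := by
        have h1 : ∑ S : Finset V, y S * g S ≤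
            ∑ S : Finset V, (y S * f S - (if v ∈ S then y S * f {v} else 0)) :=
          Finset.sum_le_sum fun S _ => hpt S
        have h2 : ∑ S : Finset V, (if v ∈ S then y S * f {v} else 0)
            = (∑ S ∈ univ.filter (fun S : Finset V => v ∈ S), y S) * f {v} := by
          rw [Finset.sum_mul, Finset.sum_filter]
        rw [Finset.sum_sub_distrib, h2] at h1
        exact h1
      have ht : 1 ≤ ∑ S ∈ univ.filter (fun S : Finset V => v ∈ S), y S :=
        hcov v (mem_insert_self v Q')
      have hfv : 0 ≤ f {v} := hnn {v}
      have hfin : f (insert v Q') = g Q' + f {v} := by simp [hg]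
      rw [hfin]
      nlinarith [hIH, hsum]

theorem stmt_17 (V : Type*) [Fintype V] [DecidableEq V]
    (F : Finset V → Prop) (hup : ∀ A B : Finset V, F A → A ⊆ B → F B)
    (β : ℕ) (hβ : 0 < β)
    (hbound : ∀ B : Finset V, IsBlockerElem F B → B.card ≤ β)
    (f : Finset V → ℝ) (hnn : ∀ S, 0 ≤ f S) (hnorm : f ∅ = 0)
    (hmono : ∀ A B : Finset V, A ⊆ B → f A ≤ f B)
    (hsub : ∀ A B : Finset V, f (A ∪ B) + f (A ∩ B) ≤ f A + f B)
    (x : Finset V → ℝ) (hx : ∀ S, 0 ≤ x S)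
    (hfeas : ∀ B : Finset V, IsBlockerElem F B →
      1 ≤ ∑ v ∈ B, ∑ S ∈ Finset.univ.filter (fun S : Finset V => v ∈ S), x S) :
    F (Finset.univ.filter (fun v : V =>
        (β : ℝ)⁻¹ ≤ ∑ S ∈ Finset.univ.filter (fun S : Finset V => v ∈ S), x S)) ∧
    f (Finset.univ.filter (fun v : V =>
        (β : ℝ)⁻¹ ≤ ∑ S ∈ Finset.univ.filter (fun S : Finset V => v ∈ S), x S)) ≤
      (β : ℝ) * ∑ S : Finset V, x S * f S := by
  classical
  have hβR : (0 : ℝ) < (β : ℝ) := by exact_mod_cast hβ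
  set t : V → ℝ := fun v => ∑ S ∈ univ.filter (fun S : Finset V => v ∈ S), x S with htdef
  set Q : Finset V := univ.filter (fun v : V => (β : ℝ)⁻¹ ≤ t v) with hQdef
  have hFQ : F Q := by
    by_contra hQ
    have htrans : ∀ A, F A → ((Qᶜ) ∩ A).Nonempty := by
      intro A hA
      by_contra hne
      have hsubQ : A ⊆ Q := by
        intro a ha
        by_contra haQ
        exact hne ⟨a, Finset.mem_inter.mpr ⟨Finset.mem_compl.mpr haQ, ha⟩⟩
      exact hQ (hup A Q hA hsubQ)
    set T : Finset (Finset V) :=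
      (Qᶜ).powerset.filter (fun B => ∀ A, F A → (B ∩ A).Nonempty) with hTdef
    have hCT : Qᶜ ∈ T :=
      Finset.mem_filter.mpr ⟨Finset.mem_powerset.mpr Finset.Subset.rfl, htrans⟩
    obtain ⟨B, hBT, hBmin⟩ := T.exists_min_image Finset.card ⟨_, hCT⟩
    obtain ⟨hBpow, hBtr⟩ := Finset.mem_filter.mp hBT
    have hBsub : B ⊆ Qᶜ := Finset.mem_powerset.mp hBpow
    have hblk : IsBlockerElem F B := by
      refine ⟨hBtr, fun B' hB' htr' => ?_⟩
      have hB'T : B' ∈ T :=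
        Finset.mem_filter.mpr ⟨Finset.mem_powerset.mpr (hB'.trans hBsub), htr'⟩
      exact Finset.eq_of_subset_of_card_le hB' (hBmin B' hB'T)
    have h1 := hfeas B hblk
    have hlt : ∀ v ∈ B, t v < (β : ℝ)⁻¹ := by
      intro v hv
      have hvQ : v ∉ Q := Finset.mem_compl.mp (hBsub hv)
      rw [hQdef, Finset.mem_filter] at hvQ
      push_neg at hvQ
      exact hvQ (Finset.mem_univ v)
    have hcard : (B.card : ℝ) ≤ (β : ℝ) := by exact_mod_cast hbound B hblk
    rcases B.eq_empty_or_nonempty with hBe | hBne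
    · rw [hBe] at h1; simp at h1; linarith
    · have hsl : ∑ v ∈ B, t v < ∑ v ∈ B, (β : ℝ)⁻¹ :=
        Finset.sum_lt_sum_of_nonempty hBne hlt
      have : ∑ v ∈ B, (β : ℝ)⁻¹ = (B.card : ℝ) * (β : ℝ)⁻¹ := by
        rw [Finset.sum_const, nsmul_eq_mul]
      rw [this] at hsl
      have h2 : (B.card : ℝ) * (β : ℝ)⁻¹ ≤ (β : ℝ) * (β : ℝ)⁻¹ :=
        mul_le_mul_of_nonneg_right hcard (by positivity)
      rw [mul_inv_cancel₀ (ne_of_gt hβR)] at h2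
      have h3 : ∑ v ∈ B, t v < 1 := lt_of_lt_of_le hsl h2
      exact absurd h1 (not_le.mpr h3)
  refine ⟨hFQ, ?_⟩
  have hcov : ∀ v ∈ Q, 1 ≤ ∑ S ∈ univ.filter (fun S : Finset V => v ∈ S),
      ((β : ℝ) * x S) := by
    intro v hv
    rw [hQdef, Finset.mem_filter] at hv
    have hvt : (β : ℝ)⁻¹ ≤ t v := hv.2
    have : (β : ℝ) * (β : ℝ)⁻¹ ≤ (β : ℝ) * t v :=
      mul_le_mul_of_nonneg_left hvt (le_of_lt hβR)
    rw [mul_inv_cancel₀ (ne_of_gt hβR)] at this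
    calc (1 : ℝ) ≤ (β : ℝ) * t v := this
      _ = ∑ S ∈ univ.filter (fun S : Finset V => v ∈ S), ((β : ℝ) * x S) := by
          rw [htdef]; rw [Finset.mul_sum]
  have := cover_bound Q f hnn hnorm hmono hsub (fun S => (β : ℝ) * x S)
    (fun S => mul_nonneg (le_of_lt hβR) (hx S)) hcov
  calc f Q ≤ ∑ S : Finset V, ((β : ℝ) * x S) * f S := this
    _ = (β : ℝ) * ∑ S : Finset V, x S * f S := by
        rw [Finset.mul_sum]; exact Finset.sum_congr rfl fun S _ => by ring
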